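/- For every finite set P ⊆ U and every finite set Q ⊆ U, the sum over all tiles f of QT(P) of the cardinalities |Q ∩ f| equals |Q|; in particular, the total size of the conflict lists of the tiles of QT(P) with respect to Q is exactly |Q|. -/

import Mathlib

/-- The unit square `U = [0,1) × [0,1)`. -/
def unitSq : Set (ℝ × ℝ) := Set.Ico (0 : ℝ) 1 ×ˢ Set.Ico (0 : ℝ) 1

/-- The square `[i/2^k, (i+1)/2^k) × [j/2^k, (j+1)/2^k)`. -/
def canSq (k : ℕ) (i j : ℤ) : Set (ℝ × ℝ) :=
  Set.Ico ((i : ℝ) / 2 ^ k) (((i : ℝ) + 1) / 2 ^ k) ×ˢ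
    Set.Ico ((j : ℝ) / 2 ^ k) (((j : ℝ) + 1) / 2 ^ k)

/-- `σ` is a canonical square of side length `2⁻ᵏ`: it has the form
`[i/2^k, (i+1)/2^k) × [j/2^k, (j+1)/2^k)` with `0 ≤ i, j < 2^k`
(so it is contained in the unit square). -/
def IsCanSqSide (k : ℕ) (σ : Set (ℝ × ℝ)) : Prop :=
  ∃ i j : ℤ, 0 ≤ i ∧ i < 2 ^ k ∧ 0 ≤ j ∧ j < 2 ^ k ∧ σ = canSq k i j

/-- `σ` is a canonical square. -/
def IsCanSq (σ : Set (ℝ × ℝ)) : Prop := ∃ k : ℕ, IsCanSqSide k σ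

/-- `q` is one of the four quadrants of the canonical square `σ`: if `σ` has side
length `2⁻ᵏ`, the quadrants are the canonical squares of side length `2⁻⁽ᵏ⁺¹⁾`
contained in `σ`. -/
def IsQuadrantOf (q σ : Set (ℝ × ℝ)) : Prop :=
  ∃ k : ℕ, IsCanSqSide k σ ∧ IsCanSqSide (k + 1) q ∧ q ⊆ σ

/-- `σ` is the smallest canonical square containing `S`: it is a canonical square,
it contains `S`, and it is contained in every canonical square containing `S`. -/
def IsSmallestCanSq (S σ : Set (ℝ × ℝ)) : Prop :=
  IsCanSq σ ∧ S ⊆ σ ∧ ∀ τ : Set (ℝ × ℝ), IsCanSq τ → S ⊆ τ → σ ⊆ τ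

open scoped Classical

/-- `smallestCanSq S`: the smallest canonical square containing `S` (junk value `∅` if none exists). -/
noncomputable def smallestCanSq (S : Set (ℝ × ℝ)) : Set (ℝ × ℝ) :=
  if h : ∃ σ : Set (ℝ × ℝ), IsSmallestCanSq S σ then h.choose else ∅

/-- A canonical square `σ` is critical for `P` if at least two of its four
quadrants contain a point of `P`. -/
def Critical (P σ : Set (ℝ × ℝ)) : Prop :=
  IsCanSq σ ∧ ∃ q₁ q₂ : Set (ℝ × ℝ), IsQuadrantOf q₁ σ ∧ IsQuadrantOf q₂ σ ∧
    q₁ ≠ q₂ ∧ (P ∩ q₁).Nonempty ∧ (P ∩ q₂).Nonempty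

/-- The tiles of the compressed quadtree map `QT(P)`: (i) `U` itself if `|P| ≤ 1`;
(ii) the annulus `U \ sq(P)` if `|P| ≥ 2` and `sq(P) ≠ U`; (iii) for every
canonical square `σ` critical for `P` and every quadrant `q` of `σ`: the square
`q` if `|P ∩ q| ≤ 1`, and the annulus `q \ sq(P ∩ q)` if `|P ∩ q| ≥ 2` and
`sq(P ∩ q) ≠ q`. -/
noncomputable def QT (P : Set (ℝ × ℝ)) : Set (Set (ℝ × ℝ)) :=
  {f | (P.ncard ≤ 1 ∧ f = unitSq)
    ∨ (2 ≤ P.ncard ∧ smallestCanSq P ≠ unitSq ∧ f = unitSq \ smallestCanSq P)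
    ∨ (∃ σ q : Set (ℝ × ℝ), Critical P σ ∧ IsQuadrantOf q σ ∧
        (((P ∩ q).ncard ≤ 1 ∧ f = q)
          ∨ (2 ≤ (P ∩ q).ncard ∧ smallestCanSq (P ∩ q) ≠ q ∧ f = q \ smallestCanSq (P ∩ q))))}

-- ====== auxiliary development ======

lemma qt_mem_Ico_div {k : ℕ} {i : ℤ} {a : ℝ} :
    a ∈ Set.Ico ((i:ℝ)/2^k) (((i:ℝ)+1)/2^k) ↔ ⌊a * 2^k⌋ = i := by
  have h2 : (0:ℝ) < 2^k := by positivity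
  rw [Set.mem_Ico, div_le_iff₀ h2, lt_div_iff₀ h2, Int.floor_eq_iff]


lemma qt_mem_canSq {k : ℕ} {i j : ℤ} {x : ℝ × ℝ} :
    x ∈ canSq k i j ↔ ⌊x.1 * 2^k⌋ = i ∧ ⌊x.2 * 2^k⌋ = j := by
  simp only [canSq, Set.mem_prod, qt_mem_Ico_div]

noncomputable def sqAt (k : ℕ) (x : ℝ × ℝ) : Set (ℝ × ℝ) := canSq k ⌊x.1 * 2^k⌋ ⌊x.2 * 2^k⌋

lemma qt_mem_sqAt_self {k : ℕ} {x : ℝ × ℝ} : x ∈ sqAt k x := qt_mem_canSq.mpr ⟨rfl, rfl⟩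

lemma qt_mem_sqAt {k : ℕ} {x y : ℝ × ℝ} :
    y ∈ sqAt k x ↔ ⌊y.1 * 2^k⌋ = ⌊x.1 * 2^k⌋ ∧ ⌊y.2 * 2^k⌋ = ⌊x.2 * 2^k⌋ := qt_mem_canSq

lemma qt_canSq_eq_sqAt {k : ℕ} {i j : ℤ} {x : ℝ × ℝ} (h : x ∈ canSq k i j) :
    canSq k i j = sqAt k x := by
  obtain ⟨h1, h2⟩ := qt_mem_canSq.mp h
  rw [sqAt, h1, h2]

lemma qt_eq_sqAt {k : ℕ} {σ : Set (ℝ × ℝ)} {x : ℝ × ℝ} (hσ : IsCanSqSide k σ) (hx : x ∈ σ) :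
    σ = sqAt k x := by
  obtain ⟨i, j, _, _, _, _, rfl⟩ := hσ
  exact qt_canSq_eq_sqAt hx

lemma qt_floor_le_level {k m : ℕ} {a b : ℝ} (h : ⌊a * 2^(k+m)⌋ ≤ ⌊b * 2^(k+m)⌋) :
    ⌊a * 2^k⌋ ≤ ⌊b * 2^k⌋ := by
  have h2 : (0:ℝ) < 2^m := by positivity
  have h1 : ((⌊a*2^k⌋ * 2^m : ℤ) : ℝ) ≤ a * 2^(k+m) := by
    push_cast
    rw [pow_add]
    have := Int.floor_le (a * 2^k)
    nlinarith
  have h1' : (⌊a*2^k⌋ * 2^m : ℤ) ≤ ⌊a * 2^(k+m)⌋ := Int.le_floor.mpr h1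
  have h3 : (⌊b*2^(k+m)⌋ : ℝ) ≤ b * 2^k * 2^m := by
    calc (⌊b*2^(k+m)⌋ : ℝ) ≤ b * 2^(k+m) := Int.floor_le _
    _ = b * 2^k * 2^m := by rw [pow_add]; ring
  rw [Int.le_floor]
  have h4 : (⌊a*2^k⌋ : ℝ) * 2^m ≤ b * 2^k * 2^m := by
    calc (⌊a*2^k⌋:ℝ) * 2^m = ((⌊a*2^k⌋ * 2^m : ℤ) : ℝ) := by push_cast; ring
    _ ≤ (⌊a*2^(k+m)⌋ : ℝ) := by exact_mod_cast h1'
    _ ≤ (⌊b*2^(k+m)⌋ : ℝ) := by exact_mod_cast h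
    _ ≤ _ := h3
  exact le_of_mul_le_mul_right h4 h2

lemma qt_floor_eq_level {k m : ℕ} {a b : ℝ} (h : ⌊a * 2^(k+m)⌋ = ⌊b * 2^(k+m)⌋) :
    ⌊a * 2^k⌋ = ⌊b * 2^k⌋ :=
  le_antisymm (qt_floor_le_level h.le) (qt_floor_le_level h.ge)

lemma qt_sqAt_anti {k k' : ℕ} (h : k ≤ k') (x : ℝ × ℝ) : sqAt k' x ⊆ sqAt k x := by
  intro y hy
  obtain ⟨h1, h2⟩ := qt_mem_sqAt.mp hy
  obtain ⟨m, rfl⟩ := Nat.exists_eq_add_of_le h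
  exact qt_mem_sqAt.mpr ⟨qt_floor_eq_level h1, qt_floor_eq_level h2⟩

lemma qt_mem_unitSq {x : ℝ × ℝ} : x ∈ unitSq ↔ (0 ≤ x.1 ∧ x.1 < 1) ∧ (0 ≤ x.2 ∧ x.2 < 1) := by
  simp [unitSq, Set.mem_prod]

lemma qt_sqAt_side {k : ℕ} {x : ℝ × ℝ} (hx : x ∈ unitSq) : IsCanSqSide k (sqAt k x) := by
  obtain ⟨⟨h1, h2⟩, h3, h4⟩ := qt_mem_unitSq.mp hx
  have h2k : (0:ℝ) < 2^k := by positivity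
  refine ⟨⌊x.1 * 2^k⌋, ⌊x.2 * 2^k⌋, ?_, ?_, ?_, ?_, rfl⟩
  · exact Int.floor_nonneg.mpr (by positivity)
  · rw [Int.floor_lt]; push_cast; nlinarith
  · exact Int.floor_nonneg.mpr (by positivity)
  · rw [Int.floor_lt]; push_cast; nlinarith

lemma qt_unitSq_eq : unitSq = canSq 0 0 0 := by
  simp [unitSq, canSq]

lemma qt_sqAt_zero {x : ℝ × ℝ} (hx : x ∈ unitSq) : sqAt 0 x = unitSq := by
  rw [qt_unitSq_eq] at hx ⊢
  exact (qt_canSq_eq_sqAt hx).symm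

lemma qt_canSq_subset_unit {k : ℕ} {σ : Set (ℝ × ℝ)} (h : IsCanSqSide k σ) : σ ⊆ unitSq := by
  obtain ⟨i, j, hi0, hik, hj0, hjk, rfl⟩ := h
  rintro ⟨a, b⟩ ⟨⟨ha1, ha2⟩, hb1, hb2⟩
  have h2k : (0:ℝ) < 2^k := by positivity
  have hik' : ((i:ℝ) + 1) ≤ 2^k := by
    have : ((i + 1 : ℤ) : ℝ) ≤ ((2^k : ℤ) : ℝ) := by exact_mod_cast hik
    push_cast at this; linarith
  have hjk' : ((j:ℝ) + 1) ≤ 2^k := by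
    have : ((j + 1 : ℤ) : ℝ) ≤ ((2^k : ℤ) : ℝ) := by exact_mod_cast hjk
    push_cast at this; linarith
  have hi0' : (0:ℝ) ≤ (i:ℝ) := by exact_mod_cast hi0
  have hj0' : (0:ℝ) ≤ (j:ℝ) := by exact_mod_cast hj0
  refine qt_mem_unitSq.mpr ⟨⟨?_, ?_⟩, ?_, ?_⟩ <;> simp only []
  · calc (0:ℝ) ≤ (i:ℝ)/2^k := by positivity
    _ ≤ a := ha1
  · calc a < ((i:ℝ)+1)/2^k := ha2
    _ ≤ 1 := by rw [div_le_one h2k]; linarith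
  · calc (0:ℝ) ≤ (j:ℝ)/2^k := by positivity
    _ ≤ b := hb1
  · calc b < ((j:ℝ)+1)/2^k := hb2
    _ ≤ 1 := by rw [div_le_one h2k]; linarith

lemma qt_canSq_level_eq {k k' : ℕ} {i j i' j' : ℤ} (h : canSq k i j = canSq k' i' j') :
    k = k' := by
  by_contra hne
  wlog hlt : k < k' generalizing k k' i j i' j'
  · exact this h.symm (Ne.symm hne) (by omega)
  obtain ⟨m, rfl⟩ : ∃ m, k' = k + m := ⟨k' - k, by omega⟩
  have hm : 1 ≤ m := by omega
  have h2k : (0:ℝ) < 2^k := by positivity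
  have h2m : (0:ℝ) < 2^m := by positivity
  set c : ℝ × ℝ := ((i:ℝ)/2^k, (j:ℝ)/2^k) with hc
  have hfc1 : (c.1 * 2^k) = (i:ℝ) := by rw [hc]; field_simp
  have hfc2 : (c.2 * 2^k) = (j:ℝ) := by rw [hc]; field_simp
  have hcmem : c ∈ canSq k i j := by
    rw [qt_mem_canSq, hfc1, hfc2]
    exact ⟨Int.floor_intCast i, Int.floor_intCast j⟩
  have hcmem' : c ∈ canSq (k+m) i' j' := h ▸ hcmem
  obtain ⟨hi', hj'⟩ := qt_mem_canSq.mp hcmem'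
  set d : ℝ × ℝ := (c.1 + 1/2^(k+m), c.2) with hd
  have hdk : d ∈ canSq k i j := by
    rw [qt_mem_canSq]
    constructor
    · have : d.1 * 2^k = (i:ℝ) + 2^k/2^(k+m) := by
        rw [hd]; push_cast; rw [add_mul, hfc1]; ring
      rw [this]
      have hlt1 : (2:ℝ)^k/2^(k+m) < 1 := by
        rw [div_lt_one (by positivity)]
        exact pow_lt_pow_right₀ one_lt_two (by omega)
      have hge0 : (0:ℝ) ≤ 2^k/2^(k+m) := by positivity
      rw [Int.floor_eq_iff] <;> push_cast <;> constructor <;> linarith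
    · rw [hd]; simpa [hfc2] using Int.floor_intCast j
  have hdk' : d ∉ canSq (k+m) i' j' := by
    rw [qt_mem_canSq]
    rintro ⟨h1, -⟩
    have hc1 : c.1 * 2^(k+m) = (i:ℝ) * 2^m := by
      rw [pow_add, ← mul_assoc, hfc1]
    have hd1 : d.1 * 2^(k+m) = (i:ℝ) * 2^m + 1 := by
      rw [hd]; push_cast
      rw [add_mul, hc1, one_div, inv_mul_cancel₀ (by positivity)]
    have e1 : i' = i * 2^m := by
      rw [← hi', hc1]
      rw [show ((i:ℝ) * 2^m) = ((i * 2^m : ℤ) : ℝ) by push_cast; ring]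
      exact Int.floor_intCast _
    have e2 : ⌊d.1 * 2^(k+m)⌋ = i * 2^m + 1 := by
      rw [hd1]
      rw [show ((i:ℝ) * 2^m + 1) = ((i * 2^m + 1 : ℤ) : ℝ) by push_cast; ring]
      exact Int.floor_intCast _
    omega
  exact hdk' (h ▸ hdk)

lemma qt_side_level_eq {k k' : ℕ} {σ : Set (ℝ × ℝ)} (h : IsCanSqSide k σ)
    (h' : IsCanSqSide k' σ) : k = k' := by
  obtain ⟨i, j, _, _, _, _, rfl⟩ := h
  obtain ⟨i', j', _, _, _, _, he⟩ := h'
  exact qt_canSq_level_eq he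

lemma qt_same_level_eq {k : ℕ} {σ τ : Set (ℝ × ℝ)} {x : ℝ × ℝ} (hσ : IsCanSqSide k σ)
    (hτ : IsCanSqSide k τ) (hxσ : x ∈ σ) (hxτ : x ∈ τ) : σ = τ := by
  rw [qt_eq_sqAt hσ hxσ, qt_eq_sqAt hτ hxτ]

lemma qt_nested {k k' : ℕ} {σ τ : Set (ℝ × ℝ)} {x : ℝ × ℝ} (hσ : IsCanSqSide k σ)
    (hτ : IsCanSqSide k' τ) (hkk : k ≤ k') (hxσ : x ∈ σ) (hxτ : x ∈ τ) : τ ⊆ σ := by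
  rw [qt_eq_sqAt hσ hxσ, qt_eq_sqAt hτ hxτ]
  exact qt_sqAt_anti hkk x

lemma qt_floor_sep {a b : ℝ} (hab : a ≠ b) : ∃ K : ℕ, ⌊a * 2^K⌋ ≠ ⌊b * 2^K⌋ := by
  obtain ⟨K, hK⟩ := pow_unbounded_of_one_lt (R := ℝ) |a - b|⁻¹ one_lt_two
  refine ⟨K, fun h => ?_⟩
  have h2 : (0:ℝ) < |a - b| := abs_pos.mpr (sub_ne_zero.mpr hab)
  have hKpos : (0:ℝ) < 2^K := by positivity
  have h1 : |a * 2^K - b * 2^K| < 1 := by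
    have p1 := Int.floor_le (a * 2^K)
    have p2 := Int.lt_floor_add_one (a * 2^K)
    have p3 := Int.floor_le (b * 2^K)
    have p4 := Int.lt_floor_add_one (b * 2^K)
    rw [h] at p1 p2
    rw [abs_lt]; constructor <;> linarith
  have h3 : |a - b| * 2^K < 1 := by
    calc |a - b| * 2^K = |a - b| * |(2:ℝ)^K| := by rw [abs_of_pos hKpos]
    _ = |(a - b) * 2^K| := (abs_mul _ _).symm
    _ = |a * 2^K - b * 2^K| := by ring_nf
    _ < 1 := h1
  have h4 := mul_lt_mul_of_pos_left hK h2
  rw [mul_inv_cancel₀ h2.ne'] at h4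
  linarith

lemma qt_point_sep {x y : ℝ × ℝ} (hxy : x ≠ y) : ∃ K : ℕ, ∀ k, K ≤ k → y ∉ sqAt k x := by
  have : x.1 ≠ y.1 ∨ x.2 ≠ y.2 := by
    by_contra hc
    push_neg at hc
    exact hxy (Prod.ext hc.1 hc.2)
  have hK : ∃ K : ℕ, y ∉ sqAt K x := by
    rcases this with h | h
    · obtain ⟨K, hK⟩ := qt_floor_sep h.symm
      exact ⟨K, fun hm => hK (qt_mem_sqAt.mp hm).1⟩
    · obtain ⟨K, hK⟩ := qt_floor_sep h.symm
      exact ⟨K, fun hm => hK (qt_mem_sqAt.mp hm).2⟩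
  obtain ⟨K, hK⟩ := hK
  exact ⟨K, fun k hk hm => hK (qt_sqAt_anti hk x hm)⟩

lemma qt_exists_smallest {S : Set (ℝ × ℝ)} (hSU : S ⊆ unitSq) {p q : ℝ × ℝ}
    (hp : p ∈ S) (hq : q ∈ S) (hpq : p ≠ q) : ∃ σ, IsSmallestCanSq S σ := by
  obtain ⟨K, hK⟩ := qt_point_sep hpq
  have hpU : p ∈ unitSq := hSU hp
  have h0 : S ⊆ sqAt 0 p := by rw [qt_sqAt_zero hpU]; exact hSU
  have hbound : ∀ k, S ⊆ sqAt k p → k < K := by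
    intro k hk
    by_contra hc
    exact hK k (not_lt.mp hc) (hk hq)
  set k₀ := Nat.findGreatest (fun k => S ⊆ sqAt k p) K with hk₀
  have hspec : S ⊆ sqAt k₀ p := by
    rw [hk₀]
    exact Nat.findGreatest_spec (P := fun k => S ⊆ sqAt k p) (Nat.zero_le K) h0
  refine ⟨sqAt k₀ p, ⟨k₀, qt_sqAt_side hpU⟩, hspec, ?_⟩
  rintro τ ⟨m, hτ⟩ hSτ
  have hτ' : τ = sqAt m p := qt_eq_sqAt hτ (hSτ hp)
  have hm : S ⊆ sqAt m p := hτ' ▸ hSτ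
  have hmK : m ≤ K := (hbound m hm).le
  have hmk₀ : m ≤ k₀ := by
    rw [hk₀]
    exact Nat.le_findGreatest (P := fun k => S ⊆ sqAt k p) hmK hm
  rw [hτ']
  exact qt_sqAt_anti hmk₀ p

lemma qt_smallest_unique {S σ τ : Set (ℝ × ℝ)} (h1 : IsSmallestCanSq S σ)
    (h2 : IsSmallestCanSq S τ) : σ = τ :=
  subset_antisymm (h1.2.2 τ h2.1 h2.2.1) (h2.2.2 σ h1.1 h1.2.1)

lemma qt_smallestCanSq_eq {S σ : Set (ℝ × ℝ)} (h : IsSmallestCanSq S σ) :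
    smallestCanSq S = σ := by
  have hex : ∃ σ', IsSmallestCanSq S σ' := ⟨σ, h⟩
  rw [smallestCanSq, dif_pos hex]
  exact qt_smallest_unique hex.choose_spec h

lemma qt_quadrant_sqAt {k : ℕ} {σ : Set (ℝ × ℝ)} {x : ℝ × ℝ} (hσ : IsCanSqSide k σ)
    (hx : x ∈ σ) (hxU : x ∈ unitSq) : IsQuadrantOf (sqAt (k+1) x) σ := by
  refine ⟨k, hσ, qt_sqAt_side hxU, ?_⟩
  rw [qt_eq_sqAt hσ hx]
  exact qt_sqAt_anti (Nat.le_succ k) x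

/-- From criticality: the level, and two distinct points of `P ∩ σ` lying in different
level-(k+1) squares. -/
lemma qt_critical_struct {P σ : Set (ℝ × ℝ)} (h : Critical P σ) :
    ∃ k, IsCanSqSide k σ ∧ ∃ p q, p ∈ P ∩ σ ∧ q ∈ P ∩ σ ∧ p ≠ q ∧
      sqAt (k+1) p ≠ sqAt (k+1) q := by
  obtain ⟨-, q₁, q₂, ⟨k₁, hσ1, hq1, hsub1⟩, ⟨k₂, hσ2, hq2, hsub2⟩, hne, ⟨p, hpP, hpq1⟩,
    ⟨q, hqP, hqq2⟩⟩ := h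
  obtain rfl : k₁ = k₂ := qt_side_level_eq hσ1 hσ2
  have e1 : q₁ = sqAt (k₁+1) p := qt_eq_sqAt hq1 hpq1
  have e2 : q₂ = sqAt (k₁+1) q := qt_eq_sqAt hq2 hqq2
  refine ⟨k₁, hσ1, p, q, ⟨hpP, hsub1 hpq1⟩, ⟨hqP, hsub2 hqq2⟩, ?_, ?_⟩
  · rintro rfl
    exact hne (e1.trans e2.symm)
  · rw [← e1, ← e2]; exact hne

lemma qt_critical_two {P σ : Set (ℝ × ℝ)} (hPfin : P.Finite) (h : Critical P σ) :
    2 ≤ (P ∩ σ).ncard := by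
  obtain ⟨k, hσ, p, q, hp, hq, hpq, -⟩ := qt_critical_struct h
  exact (Set.one_lt_ncard (hPfin.inter_of_left σ)).mpr ⟨p, hp, q, hq, hpq⟩

lemma qt_critical_smallest {P σ : Set (ℝ × ℝ)} (hPU : P ⊆ unitSq) (h : Critical P σ) :
    IsSmallestCanSq (P ∩ σ) σ := by
  obtain ⟨k, hσ, p, q, hp, hq, hpq, hsq⟩ := qt_critical_struct h
  refine ⟨⟨k, hσ⟩, Set.inter_subset_right, ?_⟩
  rintro τ ⟨m, hτ⟩ hPτ
  rcases le_or_gt m k with hm | hm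
  · exact qt_nested hτ hσ hm (hPτ hp) hp.2
  · exfalso
    have hτ' : τ = sqAt m p := qt_eq_sqAt hτ (hPτ hp)
    have h1 : τ ⊆ sqAt (k+1) p := hτ' ▸ qt_sqAt_anti (by omega) p
    have h2 : q ∈ sqAt (k+1) p := h1 (hPτ hq)
    exact hsq (qt_same_level_eq (qt_sqAt_side (hPU hp.1)) (qt_sqAt_side (hPU hq.1))
      h2 qt_mem_sqAt_self)

lemma qt_critical_of_smallest {P σ : Set (ℝ × ℝ)} (hPU : P ⊆ unitSq) (hPfin : P.Finite)
    {k : ℕ} (hσ : IsCanSqSide k σ) (hsm : IsSmallestCanSq (P ∩ σ) σ)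
    (hcard : 2 ≤ (P ∩ σ).ncard) : Critical P σ := by
  obtain ⟨p, hp, q, hq, hpq⟩ := (Set.one_lt_ncard (hPfin.inter_of_left σ)).mp hcard
  have hpU : p ∈ unitSq := hPU hp.1
  have hr : ∃ r ∈ P ∩ σ, r ∉ sqAt (k+1) p := by
    by_contra hc
    push_neg at hc
    have hsub : σ ⊆ sqAt (k+1) p := hsm.2.2 _ ⟨k+1, qt_sqAt_side hpU⟩ hc
    have hsub' : sqAt (k+1) p ⊆ σ := by
      rw [qt_eq_sqAt hσ hp.2]
      exact qt_sqAt_anti (Nat.le_succ k) p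
    have : σ = sqAt (k+1) p := subset_antisymm hsub hsub'
    have := qt_side_level_eq hσ (this ▸ qt_sqAt_side hpU)
    omega
  obtain ⟨r, hr, hrp⟩ := hr
  refine ⟨⟨k, hσ⟩, sqAt (k+1) p, sqAt (k+1) r,
    qt_quadrant_sqAt hσ hp.2 hpU, qt_quadrant_sqAt hσ hr.2 (hPU hr.1), ?_,
    ⟨p, hp.1, qt_mem_sqAt_self⟩, ⟨r, hr.1, qt_mem_sqAt_self⟩⟩
  intro he
  exact hrp (he ▸ qt_mem_sqAt_self)

lemma qt_critical_subset_smallest {P σ σP : Set (ℝ × ℝ)} (hPU : P ⊆ unitSq)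
    (hsmP : IsSmallestCanSq P σP) (h : Critical P σ) : σ ⊆ σP := by
  obtain ⟨k, hσ, p, q, hp, hq, hpq, -⟩ := qt_critical_struct h
  obtain ⟨m, hσP⟩ := hsmP.1
  rcases le_or_gt m k with hm | hm
  · exact qt_nested hσP hσ hm (hsmP.2.1 hp.1) hp.2
  · have hsub : σP ⊆ σ := qt_nested hσ hσP hm.le hp.2 (hsmP.2.1 hp.1)
    have hPσ : P ∩ σ = P := Set.inter_eq_left.mpr (fun y hy => hsub (hsmP.2.1 hy))
    have := qt_critical_smallest hPU h
    rw [hPσ] at this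
    rw [qt_smallest_unique this hsmP]

lemma qt_exists_sep_bound {P : Set (ℝ × ℝ)} (hPfin : P.Finite) :
    ∃ K : ℕ, ∀ p ∈ P, ∀ q ∈ P, p ≠ q → ∀ k, q ∈ sqAt k p → k < K := by
  set F : (ℝ × ℝ) × (ℝ × ℝ) → ℕ :=
    fun z => if h : z.1 ≠ z.2 then (qt_point_sep h).choose else 0 with hF
  have hfin : (F '' (P ×ˢ P)).Finite := (hPfin.prod hPfin).image F
  obtain ⟨K, hK⟩ := hfin.bddAbove
  refine ⟨K + 1, fun p hp q hq hpq k hk => ?_⟩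
  have hmem : F (p, q) ∈ F '' (P ×ˢ P) := ⟨(p, q), Set.mk_mem_prod hp hq, rfl⟩
  have hle : F (p, q) ≤ K := hK hmem
  have hFval : F (p, q) = (qt_point_sep hpq).choose := by
    rw [hF]; simp only []; rw [dif_pos (show (p,q).1 ≠ (p,q).2 from hpq)]
  have hspec := (qt_point_sep hpq).choose_spec
  have hlt : k < (qt_point_sep hpq).choose := by
    by_contra hc
    exact hspec k (not_lt.mp hc) hk
  rw [hFval] at hle
  omega

lemma qt_exists_mem_QT {P : Set (ℝ × ℝ)} (hPfin : P.Finite) (hPU : P ⊆ unitSq)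
    {x : ℝ × ℝ} (hx : x ∈ unitSq) : ∃ f ∈ QT P, x ∈ f := by
  by_cases h1 : P.ncard ≤ 1
  · exact ⟨unitSq, Or.inl ⟨h1, rfl⟩, hx⟩
  push_neg at h1
  have h2 : 2 ≤ P.ncard := h1
  obtain ⟨p0, hp0, q0, hq0, hpq0⟩ := (Set.one_lt_ncard hPfin).mp h1
  obtain ⟨σP, hsmP⟩ := qt_exists_smallest hPU hp0 hq0 hpq0
  have hsqP : smallestCanSq P = σP := qt_smallestCanSq_eq hsmP
  obtain ⟨K, hK⟩ := qt_exists_sep_bound hPfin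
  by_cases hxσ : x ∈ σP
  swap
  · have hne : σP ≠ unitSq := fun h => hxσ (h ▸ hx)
    refine ⟨unitSq \ σP, Or.inr (Or.inl ⟨h2, ?_, ?_⟩), hx, hxσ⟩
    · rw [hsqP]; exact hne
    · rw [hsqP]
  · have hBbound : ∀ k, Critical P (sqAt k x) → k < K := by
      intro k hc
      obtain ⟨k', hside, p, q, hp, hq, hpq, -⟩ := qt_critical_struct hc
      have he : sqAt k x = sqAt k p := qt_eq_sqAt (qt_sqAt_side hx) hp.2
      exact hK p hp.1 q hq.1 hpq k (he ▸ hq.2)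
    obtain ⟨mP, hsideP⟩ := hsmP.1
    have hPinter : P ∩ σP = P := Set.inter_eq_left.mpr hsmP.2.1
    have hcritP : Critical P σP := by
      refine qt_critical_of_smallest hPU hPfin hsideP ?_ ?_
      · rw [hPinter]; exact hsmP
      · rw [hPinter]; exact h2
    have hσPx : σP = sqAt mP x := qt_eq_sqAt hsideP hxσ
    have hBmP : Critical P (sqAt mP x) := hσPx ▸ hcritP
    have hmPK : mP ≤ K := (hBbound mP hBmP).le
    set ks := Nat.findGreatest (fun k => Critical P (sqAt k x)) K with hks
    have hBks : Critical P (sqAt ks x) := by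
      rw [hks]
      exact Nat.findGreatest_spec (P := fun k => Critical P (sqAt k x)) hmPK hBmP
    have hmax : ∀ k, Critical P (sqAt k x) → k ≤ ks := by
      intro k hc
      rw [hks]
      exact Nat.le_findGreatest (P := fun k => Critical P (sqAt k x)) (hBbound k hc).le hc
    have hq_quad : IsQuadrantOf (sqAt (ks+1) x) (sqAt ks x) :=
      qt_quadrant_sqAt (qt_sqAt_side hx) qt_mem_sqAt_self hx
    set q : Set (ℝ × ℝ) := sqAt (ks+1) x with hqdef
    by_cases hcard : (P ∩ q).ncard ≤ 1
    · exact ⟨q, Or.inr (Or.inr ⟨_, q, hBks, hq_quad, Or.inl ⟨hcard, rfl⟩⟩), qt_mem_sqAt_self⟩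
    · push_neg at hcard
      have hfinq : (P ∩ q).Finite := hPfin.inter_of_left q
      obtain ⟨a, ha, b, hb, hab⟩ := (Set.one_lt_ncard hfinq).mp hcard
      have hPqU : P ∩ q ⊆ unitSq := fun y hy => hPU hy.1
      obtain ⟨σ', hsm'⟩ := qt_exists_smallest hPqU ha hb hab
      have hs' : smallestCanSq (P ∩ q) = σ' := qt_smallestCanSq_eq hsm'
      have hσ'q : σ' ⊆ q := hsm'.2.2 q ⟨ks+1, qt_sqAt_side hx⟩ Set.inter_subset_right
      have hPσ' : P ∩ σ' = P ∩ q :=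
        subset_antisymm (fun y hy => ⟨hy.1, hσ'q hy.2⟩) (fun y hy => ⟨hy.1, hsm'.2.1 hy⟩)
      obtain ⟨m', hside'⟩ := hsm'.1
      have hcrit' : Critical P σ' := by
        refine qt_critical_of_smallest hPU hPfin hside' ?_ ?_
        · rw [hPσ']; exact hsm'
        · rw [hPσ']; exact hcard
      have hne' : σ' ≠ q := by
        intro h
        have : Critical P (sqAt (ks+1) x) := by rw [← hqdef, ← h]; exact hcrit'
        have := hmax _ this
        omega
      have hxσ' : x ∉ σ' := by
        intro hxs
        have h1 : σ' = sqAt m' x := qt_eq_sqAt hside' hxs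
        have h2 : m' ≤ ks := hmax m' (h1 ▸ hcrit')
        have hsub1 : q ⊆ σ' := by
          rw [h1, hqdef]
          exact qt_sqAt_anti (by omega) x
        exact hne' (subset_antisymm hσ'q hsub1)
      refine ⟨q \ σ', Or.inr (Or.inr ⟨_, q, hBks, hq_quad, Or.inr ⟨hcard, ?_, ?_⟩⟩),
        qt_mem_sqAt_self, hxσ'⟩
      · rw [hs']; exact hne'
      · rw [hs']

lemma qt_tile_aux {P f₁ σ₂ q₁ q₂ : Set (ℝ × ℝ)} {a₁ a₂ : ℕ} {x : ℝ × ℝ}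
    (hPfin : P.Finite) (hPU : P ⊆ unitSq)
    (hc₂ : Critical P σ₂) (hσ₂ : IsCanSqSide a₂ σ₂) (hq₂sub : q₂ ⊆ σ₂)
    (hq₁ : IsCanSqSide (a₁+1) q₁)
    (hlt : a₁ + 1 ≤ a₂) (hxq₁ : x ∈ q₁) (hxq₂ : x ∈ q₂)
    (hbr : ((P ∩ q₁).ncard ≤ 1 ∧ f₁ = q₁)
      ∨ (2 ≤ (P ∩ q₁).ncard ∧ smallestCanSq (P ∩ q₁) ≠ q₁ ∧
          f₁ = q₁ \ smallestCanSq (P ∩ q₁)))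
    (hxf₁ : x ∈ f₁) : False := by
  have hxσ₂ : x ∈ σ₂ := hq₂sub hxq₂
  have hσ₂q₁ : σ₂ ⊆ q₁ := qt_nested hq₁ hσ₂ hlt hxq₁ hxσ₂
  obtain ⟨k', hside', p, r, hp, hr, hpr, -⟩ := qt_critical_struct hc₂
  have hpq₁ : p ∈ P ∩ q₁ := ⟨hp.1, hσ₂q₁ hp.2⟩
  have hrq₁ : r ∈ P ∩ q₁ := ⟨hr.1, hσ₂q₁ hr.2⟩
  have hcard : 2 ≤ (P ∩ q₁).ncard :=
    (Set.one_lt_ncard (hPfin.inter_of_left q₁)).mpr ⟨p, hpq₁, r, hrq₁, hpr⟩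
  rcases hbr with ⟨hle, -⟩ | ⟨-, -, hf⟩
  · omega
  obtain ⟨s, hsm⟩ := qt_exists_smallest (fun y hy => hPU hy.1 : P ∩ q₁ ⊆ unitSq) hpq₁ hrq₁ hpr
  have hs : smallestCanSq (P ∩ q₁) = s := qt_smallestCanSq_eq hsm
  obtain ⟨ms, hsides⟩ := hsm.1
  have hps : p ∈ s := hsm.2.1 hpq₁
  have hσ₂s : σ₂ ⊆ s := by
    rcases le_or_gt ms a₂ with hm | hm
    · exact qt_nested hsides hσ₂ hm hps hp.2
    · exfalso
      have h1 : s ⊆ sqAt (a₂+1) p := by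
        rw [qt_eq_sqAt hsides hps]
        exact qt_sqAt_anti (by omega) p
      have hsm₂ := qt_critical_smallest hPU hc₂
      have h2 : P ∩ σ₂ ⊆ sqAt (a₂+1) p := fun y hy => h1 (hsm.2.1 ⟨hy.1, hσ₂q₁ hy.2⟩)
      have h3 : σ₂ ⊆ sqAt (a₂+1) p :=
        hsm₂.2.2 _ ⟨a₂+1, qt_sqAt_side (hPU hp.1)⟩ h2
      have h4 : sqAt (a₂+1) p ⊆ σ₂ := by
        rw [qt_eq_sqAt hσ₂ hp.2]
        exact qt_sqAt_anti (Nat.le_succ a₂) p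
      have h5 := qt_side_level_eq hσ₂ ((subset_antisymm h3 h4) ▸ qt_sqAt_side (hPU hp.1))
      omega
  rw [hf, hs] at hxf₁
  exact hxf₁.2 (hσ₂s hxσ₂)

lemma qt_QT_disjoint {P : Set (ℝ × ℝ)} (hPfin : P.Finite) (hPU : P ⊆ unitSq) :
    ∀ f₁ ∈ QT P, ∀ f₂ ∈ QT P, ∀ x : ℝ × ℝ, x ∈ f₁ → x ∈ f₂ → f₁ = f₂ := by
  intro f₁ hf₁ f₂ hf₂ x hx₁ hx₂
  by_cases h1 : P.ncard ≤ 1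
  · have hU : ∀ f ∈ QT P, f = unitSq := by
      intro f hf
      rcases hf with ⟨-, rfl⟩ | ⟨h2, -⟩ | ⟨σ, q, hc, -, -⟩
      · rfl
      · omega
      · have := qt_critical_two hPfin hc
        have hle : (P ∩ σ).ncard ≤ P.ncard := Set.ncard_le_ncard Set.inter_subset_left hPfin
        omega
    rw [hU f₁ hf₁, hU f₂ hf₂]
  · push_neg at h1
    obtain ⟨p0, hp0, q0, hq0, hpq0⟩ := (Set.one_lt_ncard hPfin).mp h1
    obtain ⟨σP, hsmP⟩ := qt_exists_smallest hPU hp0 hq0 hpq0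
    have hsqP : smallestCanSq P = σP := qt_smallestCanSq_eq hsmP
    have hchar : ∀ f ∈ QT P, (f = unitSq \ σP) ∨
        ∃ σ q, ∃ a : ℕ, Critical P σ ∧ IsCanSqSide a σ ∧ IsCanSqSide (a+1) q ∧ q ⊆ σ ∧
          (((P ∩ q).ncard ≤ 1 ∧ f = q)
            ∨ (2 ≤ (P ∩ q).ncard ∧ smallestCanSq (P ∩ q) ≠ q ∧
                f = q \ smallestCanSq (P ∩ q))) := by
      intro f hf
      rcases hf with ⟨hle, -⟩ | ⟨-, -, rfl⟩ | ⟨σ, q, hc, ⟨a, hσa, hqa, hqs⟩, hbr⟩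
      · omega
      · left; rw [hsqP]
      · right; exact ⟨σ, q, a, hc, hσa, hqa, hqs, hbr⟩
    have hmemq : ∀ (f q : Set (ℝ × ℝ)),
        (((P ∩ q).ncard ≤ 1 ∧ f = q)
          ∨ (2 ≤ (P ∩ q).ncard ∧ smallestCanSq (P ∩ q) ≠ q ∧
              f = q \ smallestCanSq (P ∩ q))) → x ∈ f → x ∈ q := by
      rintro f q (⟨-, rfl⟩ | ⟨-, -, rfl⟩) hx
      · exact hx
      · exact hx.1
    rcases hchar f₁ hf₁ with rfl | ⟨σ₁, q₁, a₁, hc₁, hσ₁, hq₁, hq₁s, hbr₁⟩ <;>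
      rcases hchar f₂ hf₂ with rfl | ⟨σ₂, q₂, a₂, hc₂, hσ₂, hq₂, hq₂s, hbr₂⟩
    · rfl
    · exfalso
      have hxq₂ : x ∈ q₂ := hmemq f₂ q₂ hbr₂ hx₂
      exact hx₁.2 (qt_critical_subset_smallest hPU hsmP hc₂ (hq₂s hxq₂))
    · exfalso
      have hxq₁ : x ∈ q₁ := hmemq f₁ q₁ hbr₁ hx₁
      exact hx₂.2 (qt_critical_subset_smallest hPU hsmP hc₁ (hq₁s hxq₁))
    · have hxq₁ : x ∈ q₁ := hmemq f₁ q₁ hbr₁ hx₁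
      have hxq₂ : x ∈ q₂ := hmemq f₂ q₂ hbr₂ hx₂
      rcases lt_trichotomy a₁ a₂ with hlt | heq | hgt
      · exact absurd (qt_tile_aux hPfin hPU hc₂ hσ₂ hq₂s hq₁ (by omega) hxq₁ hxq₂ hbr₁ hx₁)
          (not_false)
      · subst heq
        obtain rfl : q₁ = q₂ := qt_same_level_eq hq₁ hq₂ hxq₁ hxq₂
        rcases hbr₁ with ⟨hle₁, rfl⟩ | ⟨hge₁, -, rfl⟩ <;>
          rcases hbr₂ with ⟨hle₂, rfl⟩ | ⟨hge₂, -, rfl⟩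
        · rfl
        · omega
        · omega
        · rfl
      · exact absurd (qt_tile_aux hPfin hPU hc₁ hσ₁ hq₁s hq₂ (by omega) hxq₂ hxq₁ hbr₂ hx₂)
          (not_false)


/-- The sum over all tiles `f ∈ QT(P)` of `|Q ∩ f|` equals `|Q|`: the total size
of the conflict lists of the tiles of `QT(P)` with respect to `Q` is exactly `|Q|`. -/
theorem QT_conflict_lists_total (P Q : Set (ℝ × ℝ))
    (hPfin : P.Finite) (hPU : P ⊆ unitSq)
    (hQfin : Q.Finite) (hQU : Q ⊆ unitSq) :
    ∑ᶠ f ∈ QT P, (Q ∩ f).ncard = Q.ncard := by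
  classical
  have hdisj := qt_QT_disjoint hPfin hPU
  have hex : ∀ x ∈ unitSq, ∃ f ∈ QT P, x ∈ f := fun x hx => qt_exists_mem_QT hPfin hPU hx
  set g : Set (ℝ × ℝ) → ℕ := fun f => (Q ∩ f).ncard with hg
  set pick : Set (ℝ × ℝ) → ℝ × ℝ :=
    fun f => if h : (Q ∩ f).Nonempty then h.choose else (0, 0) with hpickdef
  have hpick : ∀ f ∈ QT P ∩ Function.support g, pick f ∈ Q ∩ f := by
    rintro f ⟨hf1, hf2⟩
    rw [Function.mem_support] at hf2
    have hne : (Q ∩ f).Nonempty := Set.nonempty_of_ncard_ne_zero hf2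
    rw [hpickdef]
    simp only [dif_pos hne]
    exact hne.choose_spec
  have hsupp : (QT P ∩ Function.support g).Finite := by
    apply Set.Finite.of_finite_image (f := pick)
    · apply hQfin.subset
      rintro y ⟨f, hf, rfl⟩
      exact (hpick f hf).1
    · intro f₁ h₁ f₂ h₂ he
      exact hdisj f₁ h₁.1 f₂ h₂.1 (pick f₁) (hpick f₁ h₁).2 (he ▸ (hpick f₂ h₂).2)
  rw [finsum_mem_eq_sum g hsupp]
  set t : ℝ × ℝ → Set (ℝ × ℝ) :=
    fun x => if h : ∃ f, f ∈ QT P ∧ x ∈ f then h.choose else ∅ with htdef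
  have htspec : ∀ x ∈ Q, t x ∈ QT P ∧ x ∈ t x := by
    intro x hx
    have h : ∃ f, f ∈ QT P ∧ x ∈ f := by
      obtain ⟨f, hf, hxf⟩ := hex x (hQU hx)
      exact ⟨f, hf, hxf⟩
    rw [htdef]
    simp only [dif_pos h]
    exact h.choose_spec
  have hQcard : Q.ncard = hQfin.toFinset.card := Set.ncard_eq_toFinset_card Q hQfin
  have hmem : ∀ x ∈ hQfin.toFinset, t x ∈ hsupp.toFinset := by
    intro x hx
    rw [Set.Finite.mem_toFinset] at hx
    obtain ⟨ht1, ht2⟩ := htspec x hx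
    rw [Set.Finite.mem_toFinset]
    refine ⟨ht1, ?_⟩
    rw [Function.mem_support, hg]
    simp only []
    have : (Q ∩ t x).Nonempty := ⟨x, hx, ht2⟩
    exact ((Set.ncard_pos (hQfin.inter_of_left _)).mpr this).ne'
  rw [hQcard, Finset.card_eq_sum_card_fiberwise hmem]
  apply Finset.sum_congr rfl
  intro b hb
  rw [Set.Finite.mem_toFinset] at hb
  have hbQT : b ∈ QT P := hb.1
  have hset : (↑(hQfin.toFinset.filter (fun x => t x = b)) : Set (ℝ × ℝ)) = Q ∩ b := by
    ext y
    simp only [Finset.coe_filter, Set.Finite.mem_toFinset, Set.mem_setOf_eq, Set.mem_inter_iff]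
    constructor
    · rintro ⟨hyQ, hyt⟩
      obtain ⟨-, ht2⟩ := htspec y hyQ
      exact ⟨hyQ, hyt ▸ ht2⟩
    · rintro ⟨hyQ, hyb⟩
      obtain ⟨ht1, ht2⟩ := htspec y hyQ
      exact ⟨hyQ, hdisj (t y) ht1 b hbQT y ht2 hyb⟩
  rw [hg]
  simp only []
  rw [← hset, Set.ncard_coe_finset]
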